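/- A finite poset x with |x| ≥ 2 fails to be a product of the 2-element antichain (equivalently, is a pure antimatter causet) if and only if x has exactly one minimal vertex. -/

import Mathlib

/-- A causet: a finite partial order on a finite set of labels. -/
structure Causet where
  carrier : Finset ℕ
  rel : ℕ → ℕ → Prop
  rel_mem : ∀ a b, rel a b → a ∈ carrier ∧ b ∈ carrier
  irrefl : ∀ a, ¬ rel a a
  trans : ∀ a b c, rel a b → rel b c → rel a c

namespace Causet

/-- A minimal vertex. -/
def Minimal (x : Causet) (a : ℕ) : Prop :=
  a ∈ x.carrier ∧ ∀ b, ¬ x.rel b a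

/-- A maximal vertex. -/
def Maximal (x : Causet) (a : ℕ) : Prop :=
  a ∈ x.carrier ∧ ∀ b, ¬ x.rel a b

/-- `a` is a parent of `b` (a lower cover). -/
def Parent (x : Causet) (a b : ℕ) : Prop :=
  x.rel a b ∧ ∀ c, ¬ (x.rel a c ∧ x.rel c b)

/-- `y` is obtained from `x` by adjoining the single new element `a`, maximal in `y`. -/
def ProducesWith (x y : Causet) (a : ℕ) : Prop :=
  a ∉ x.carrier ∧ y.carrier = insert a x.carrier ∧ y.Maximal a ∧
    ∀ u v, u ∈ x.carrier → v ∈ x.carrier → (y.rel u v ↔ x.rel u v)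

/-- `x → y`: `y` is obtained from `x` by adjoining a single maximal element. -/
def Produces (x y : Causet) : Prop := ∃ a, ProducesWith x y a

/-- `y` is a product of `x`: `y = x` or there is a chain of productions from `x` to `y`. -/
def ProductOf (x y : Causet) : Prop := Relation.ReflTransGen Produces x y

/-- `x` is (a copy of) the 2-element chain. -/
def IsTwoChain (x : Causet) : Prop :=
  ∃ a b, a ≠ b ∧ x.carrier = {a, b} ∧ x.rel a b ∧ ∀ u v, x.rel u v → u = a ∧ v = b

/-- `x` is (a copy of) the 2-element antichain. -/
def IsTwoAntichain (x : Causet) : Prop :=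
  ∃ a b, a ≠ b ∧ x.carrier = {a, b} ∧ ∀ u v, ¬ x.rel u v

/-- `x` has at least two minimal vertices. -/
def TwoMinimal (x : Causet) : Prop :=
  ∃ a b, a ≠ b ∧ x.Minimal a ∧ x.Minimal b

/-- The minimal vertex `a` has a single-parent child (a child whose unique parent is `a`). -/
def MinWithSPC (x : Causet) (a : ℕ) : Prop :=
  x.Minimal a ∧ ∃ c, x.Parent a c ∧ ∀ d, x.Parent d c → d = a

/-- `x` is mixed: at least two minimal vertices, at least one of which has a
single-parent child. -/
def Mixed (x : Causet) : Prop :=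
  TwoMinimal x ∧ ∃ a, MinWithSPC x a

end Causet

section Aux

/-- Existence of a maximal element of a finite nonempty set under a transitive
irreflexive relation. -/
lemma exists_max_aux (r : ℕ → ℕ → Prop) (hirr : ∀ a, ¬ r a a)
    (htr : ∀ a b c, r a b → r b c → r a c) :
    ∀ s : Finset ℕ, s.Nonempty → ∃ m ∈ s, ∀ c ∈ s, ¬ r m c := by
  classical
  intro s
  induction s using Finset.strongInduction with
  | _ s ih =>
    intro hs
    obtain ⟨x, hx⟩ := hs
    by_cases h : ∀ c ∈ s, ¬ r x c
    · exact ⟨x, hx, h⟩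
    · push_neg at h
      obtain ⟨c, hc, hrc⟩ := h
      set t := s.filter (fun y => r x y) with ht
      have hts : t ⊂ s := by
        refine (Finset.ssubset_iff_of_subset (Finset.filter_subset _ _)).mpr ?_
        exact ⟨x, hx, by simp [ht, hirr x]⟩
      obtain ⟨m, hmt, hmax⟩ := ih t hts ⟨c, by simp [ht, hc, hrc]⟩
      have hms := (Finset.mem_filter.mp hmt)
      refine ⟨m, hms.1, fun d hd hrd => ?_⟩
      exact hmax d (Finset.mem_filter.mpr ⟨hd, htr _ _ _ hms.2 hrd⟩) hrd

/-- Restriction of a causet obtained by deleting one element. -/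
def Causet.restrict (x : Causet) (m : ℕ) : Causet where
  carrier := x.carrier.erase m
  rel u v := x.rel u v ∧ u ≠ m ∧ v ≠ m
  rel_mem := fun a b h => ⟨Finset.mem_erase.mpr ⟨h.2.1, (x.rel_mem _ _ h.1).1⟩,
    Finset.mem_erase.mpr ⟨h.2.2, (x.rel_mem _ _ h.1).2⟩⟩
  irrefl := fun a h => x.irrefl a h.1
  trans := fun a b c h1 h2 => ⟨x.trans _ _ _ h1.1 h2.1, h1.2.1, h2.2.2⟩

lemma restrict_producesWith (x : Causet) (m : ℕ) (hm : x.Maximal m) :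
    Causet.ProducesWith (x.restrict m) x m := by
  refine ⟨Finset.notMem_erase m _, (Finset.insert_erase hm.1).symm, hm, ?_⟩
  intro u v hu hv
  simp only [Causet.restrict]
  constructor
  · intro h
    exact ⟨h, (Finset.mem_erase.mp hu).1, (Finset.mem_erase.mp hv).1⟩
  · exact fun h => h.1

/-- Minimal elements survive productions. -/
lemma minimal_of_productOf {z x : Causet} (h : z.ProductOf x) :
    ∀ c, z.Minimal c → x.Minimal c := by
  induction h with
  | refl => exact fun c hc => hc
  | tail _ hstep ih =>
    rename_i y y' _
    intro c hc
    obtain ⟨m, hnm, hcar, hmax, hrel⟩ := hstep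
    have hc' := ih c hc
    refine ⟨by rw [hcar]; exact Finset.mem_insert_of_mem hc'.1, fun b hb => ?_⟩
    have hbm := y'.rel_mem _ _ hb
    rcases Finset.mem_insert.mp (hcar ▸ hbm.1) with rfl | hby
    · exact hmax.2 _ hb
    · exact hc'.2 b ((hrel b c hby hc'.1).mp hb)

/-- Key construction: a causet with two distinct minimal vertices is a product of
the two-element antichain. -/
lemma product_of_twoMinimal : ∀ n (x : Causet), x.carrier.card = n →
    ∀ a b, a ≠ b → x.Minimal a → x.Minimal b →
    ∃ z : Causet, z.IsTwoAntichain ∧ z.ProductOf x := by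
  intro n
  induction n using Nat.strong_induction_on with
  | _ n ih =>
    intro x hcard a b hab ha hb
    have hsub : ({a, b} : Finset ℕ) ⊆ x.carrier := by
      intro u hu
      rcases Finset.mem_insert.mp hu with rfl | hu
      · exact ha.1
      · rw [Finset.mem_singleton.mp hu]; exact hb.1
    have hpair : ({a, b} : Finset ℕ).card = 2 := Finset.card_pair hab
    by_cases hcase : x.carrier.card = 2
    · -- base case: x itself is the antichain
      have hc : x.carrier = {a, b} :=
        (Finset.eq_of_subset_of_card_le hsub (by rw [hpair, hcase])).symm
      refine ⟨x, ⟨a, b, hab, hc, fun u v huv => ?_⟩, Relation.ReflTransGen.refl⟩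
      have hv := (x.rel_mem _ _ huv).2
      rw [hc] at hv
      rcases Finset.mem_insert.mp hv with rfl | hv
      · exact ha.2 u huv
      · rw [Finset.mem_singleton.mp hv] at huv
        exact hb.2 u huv
    · -- inductive step: remove a maximal element other than a, b
      have hlt : 2 < x.carrier.card :=
        lt_of_le_of_ne (hpair ▸ Finset.card_le_card hsub) (Ne.symm hcase)
      have hne : (x.carrier \ {a, b}).Nonempty := by
        rw [← Finset.card_pos, Finset.card_sdiff_of_subset hsub, hpair]
        omega
      obtain ⟨m, hm, hmax⟩ := exists_max_aux x.rel x.irrefl x.trans _ hne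
      have hmcar := (Finset.mem_sdiff.mp hm).1
      have hmab := (Finset.mem_sdiff.mp hm).2
      have hxmax : x.Maximal m := by
        refine ⟨hmcar, fun c hc => ?_⟩
        have hccar := (x.rel_mem _ _ hc).2
        have hcab : c ∉ ({a, b} : Finset ℕ) := by
          intro hcm
          rcases Finset.mem_insert.mp hcm with rfl | hcm
          · exact ha.2 m hc
          · rw [Finset.mem_singleton.mp hcm] at hc
            exact hb.2 m hc
        exact hmax c (Finset.mem_sdiff.mpr ⟨hccar, hcab⟩) hc
      set x' := x.restrict m with hx'
      have hma : m ≠ a := fun h => hmab (by rw [h]; exact Finset.mem_insert_self _ _)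
      have hmb : m ≠ b := fun h => hmab (by rw [h]; simp)
      have ha' : x'.Minimal a := by
        refine ⟨Finset.mem_erase.mpr ⟨Ne.symm hma, ha.1⟩, fun c hc => ?_⟩
        exact ha.2 c hc.1
      have hb' : x'.Minimal b := by
        refine ⟨Finset.mem_erase.mpr ⟨Ne.symm hmb, hb.1⟩, fun c hc => ?_⟩
        exact hb.2 c hc.1
      have hcard' : x'.carrier.card = n - 1 := by
        simp only [hx', Causet.restrict]
        rw [Finset.card_erase_of_mem hmcar, hcard]
      obtain ⟨z, hz, hzp⟩ := ih (n - 1) (by omega) x' hcard' a b hab ha' hb'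
      exact ⟨z, hz, Relation.ReflTransGen.tail hzp ⟨m, restrict_producesWith x m hxmax⟩⟩

/-- A nonempty causet has a minimal element. -/
lemma exists_minimal (x : Causet) (hne : x.carrier.Nonempty) : ∃ a, x.Minimal a := by
  obtain ⟨m, hm, hmax⟩ := exists_max_aux (fun u v => x.rel v u) x.irrefl
    (fun a b c h1 h2 => x.trans _ _ _ h2 h1) x.carrier hne
  refine ⟨m, hm, fun c hc => ?_⟩
  exact hmax c (x.rel_mem _ _ hc).1 hc

end Aux

/-- A finite poset `x` with `|x| ≥ 2` fails to be a product of the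
2-element antichain iff `x` has exactly one minimal vertex. -/
theorem stmt3 (x : Causet) (hx : 2 ≤ x.carrier.card) :
    (¬ ∃ z : Causet, z.IsTwoAntichain ∧ z.ProductOf x) ↔ (∃! a, x.Minimal a) := by
  constructor
  · intro hno
    obtain ⟨a, ha⟩ := exists_minimal x (Finset.card_pos.mp (by omega))
    refine ⟨a, ha, fun b hb => ?_⟩
    by_contra hba
    exact hno (product_of_twoMinimal x.carrier.card x rfl b a hba hb ha)
  · rintro ⟨a, ha, huniq⟩ ⟨z, ⟨u, v, huv, hcar, hnone⟩, hprod⟩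
    have hu : x.Minimal u := minimal_of_productOf hprod u
      ⟨by rw [hcar]; exact Finset.mem_insert_self _ _, fun c => hnone c u⟩
    have hv : x.Minimal v := minimal_of_productOf hprod v
      ⟨by rw [hcar]; simp, fun c => hnone c v⟩
    exact huv ((huniq u hu).trans (huniq v hv).symm)
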